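/- Let P ⊆ ℝ^m and φ ∈ S^{m−1}. Then P is logarithmically dense along φ if and only if for every ε > 0 there exists C° > 0 such that for all C ≥ C° there exists p ∈ P with ‖p − Cφ‖ < Cε. -/

import Mathlib

open Filter

/-- `P` is logarithmically dense along the unit vector `φ`. -/
def LogDenseAlong {E : Type*} [NormedAddCommGroup E] [NormedSpace ℝ E]
    (P : Set E) (φ : E) : Prop :=
  ∀ ε > (0 : ℝ), ∃ s : ℕ → ℝ,
    (∀ k, ∃ p ∈ P, ‖(‖p‖⁻¹ : ℝ) • p - φ‖ < ε ∧ ‖p‖ = s k) ∧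
    Tendsto s atTop atTop ∧
    Tendsto (fun k => s (k + 1) / s k) atTop (nhds 1)

theorem stmt2 {m : ℕ} (P : Set (EuclideanSpace ℝ (Fin m)))
    (φ : EuclideanSpace ℝ (Fin m)) (hφ : ‖φ‖ = 1) :
    LogDenseAlong P φ ↔
      ∀ ε > (0 : ℝ), ∃ C₀ > (0 : ℝ), ∀ C ≥ C₀,
        ∃ p ∈ P, ‖p - C • φ‖ < C * ε := by
  constructor
  · -- forward direction
    intro h ε hε
    obtain ⟨s, hP, hsTop, hratio⟩ := h (ε / 2) (by linarith)
    have h1 : ∀ᶠ k in atTop, s (k + 1) / s k < 1 + ε / 2 :=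
      hratio (Iio_mem_nhds (show (1 : ℝ) < 1 + ε / 2 by linarith))
    have h2 : ∀ᶠ k in atTop, 1 ≤ s k := hsTop.eventually_ge_atTop 1
    obtain ⟨K, hK⟩ := eventually_atTop.mp (h1.and h2)
    refine ⟨max (s K) 1, lt_of_lt_of_le one_pos (le_max_right _ _), ?_⟩
    intro C hC
    have hCpos : (0 : ℝ) < C := lt_of_lt_of_le one_pos ((le_max_right _ _).trans hC)
    -- the set of indices `k ≥ K` with `s k ≤ C`
    set T : Set ℕ := {k | K ≤ k ∧ s k ≤ C} with hT
    have hKT : K ∈ T := ⟨le_refl K, (le_max_left _ _).trans hC⟩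
    have hTb : BddAbove T := by
      obtain ⟨N, hN⟩ := eventually_atTop.mp (hsTop.eventually_ge_atTop (C + 1))
      refine ⟨N, fun k hk => ?_⟩
      by_contra hkN
      push_neg at hkN
      have := hN k hkN.le
      have := hk.2
      linarith
    set k₀ := sSup T with hk₀def
    have hk₀ : k₀ ∈ T := Nat.sSup_mem ⟨K, hKT⟩ hTb
    have hnot : k₀ + 1 ∉ T := fun hmem => by
      have := le_csSup hTb hmem
      omega
    have hgt : C < s (k₀ + 1) := by
      by_contra hle
      push_neg at hle
      exact hnot ⟨le_trans hk₀.1 (Nat.le_succ _), hle⟩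
    have hsk1 : (1 : ℝ) ≤ s k₀ := (hK k₀ hk₀.1).2
    have hskpos : (0 : ℝ) < s k₀ := lt_of_lt_of_le one_pos hsk1
    have hskC : s k₀ ≤ C := hk₀.2
    have hrat : s (k₀ + 1) / s k₀ < 1 + ε / 2 := (hK k₀ hk₀.1).1
    have hCub : C < (1 + ε / 2) * s k₀ := by
      have := (div_lt_iff₀ hskpos).mp hrat
      linarith
    obtain ⟨p, hpP, hpdir, hpnorm⟩ := hP k₀
    refine ⟨p, hpP, ?_⟩
    have hkey : p - C • φ = s k₀ • ((‖p‖⁻¹ : ℝ) • p - φ) + (s k₀ - C) • φ := by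
      rw [smul_sub, hpnorm, smul_inv_smul₀ (ne_of_gt hskpos), sub_smul]
      abel
    have hb1 : ‖s k₀ • ((‖p‖⁻¹ : ℝ) • p - φ)‖ < s k₀ * (ε / 2) := by
      rw [norm_smul, Real.norm_eq_abs, abs_of_pos hskpos]
      exact mul_lt_mul_of_pos_left hpdir hskpos
    have hb2 : ‖(s k₀ - C) • φ‖ < ε / 2 * s k₀ := by
      rw [norm_smul, hφ, mul_one, Real.norm_eq_abs, abs_of_nonpos (by linarith)]
      linarith
    calc ‖p - C • φ‖ ≤ ‖s k₀ • ((‖p‖⁻¹ : ℝ) • p - φ)‖ + ‖(s k₀ - C) • φ‖ := by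
          rw [hkey]; exact norm_add_le _ _
      _ < s k₀ * (ε / 2) + ε / 2 * s k₀ := by linarith
      _ = s k₀ * ε := by ring
      _ ≤ C * ε := mul_le_mul_of_nonneg_right hskC (le_of_lt hε)
  · -- reverse direction
    intro h ε hε
    -- `P` is nonempty
    obtain ⟨C₁, hC₁pos, hC₁⟩ := h 1 one_pos
    obtain ⟨q₀, hq₀, -⟩ := hC₁ C₁ le_rfl
    -- distance function
    set S : ℕ → Set ℝ := fun k => (fun p => ‖p - (k : ℝ) • φ‖) '' P with hS
    have hSne : ∀ k, (S k).Nonempty := fun k => ⟨_, ⟨q₀, hq₀, rfl⟩⟩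
    have hSbd : ∀ k, BddBelow (S k) := fun k =>
      ⟨0, fun r ⟨p, _, hr⟩ => hr ▸ norm_nonneg _⟩
    set d : ℕ → ℝ := fun k => sInf (S k) with hd
    have hdnn : ∀ k, 0 ≤ d k := fun k =>
      le_csInf (hSne k) (fun r ⟨p, _, hr⟩ => hr ▸ norm_nonneg _)
    have hsel : ∀ k : ℕ, ∃ p ∈ P, ‖p - (k : ℝ) • φ‖ < d k + 1 := by
      intro k
      obtain ⟨r, ⟨p, hp, hr⟩, hlt⟩ := exists_lt_of_csInf_lt (hSne k) (lt_add_one (d k))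
      exact ⟨p, hp, by simpa [← hr] using hlt⟩
    choose p hpP hpd using hsel
    set r : ℕ → ℝ := fun k => ‖p k - (k : ℝ) • φ‖ with hr
    -- d k / k → 0
    have hdlim : Tendsto (fun k : ℕ => d k / k) atTop (nhds 0) := by
      rw [Metric.tendsto_atTop]
      intro ε' hε'
      obtain ⟨C₀, hC₀pos, hC₀⟩ := h (ε' / 2) (by linarith)
      refine ⟨max ⌈C₀⌉₊ 1, fun k hk => ?_⟩
      have hk1 : 1 ≤ k := le_trans (le_max_right _ _) hk
      have hkpos : (0 : ℝ) < k := by exact_mod_cast hk1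
      have hkC : C₀ ≤ (k : ℝ) :=
        le_trans (Nat.le_ceil C₀) (by exact_mod_cast le_trans (le_max_left _ _) hk)
      obtain ⟨q, hqP, hq⟩ := hC₀ (k : ℝ) hkC
      have hdk : d k ≤ (k : ℝ) * (ε' / 2) := le_of_lt
        (lt_of_le_of_lt (csInf_le (hSbd k) ⟨q, hqP, rfl⟩) hq)
      rw [Real.dist_eq, sub_zero, abs_of_nonneg (div_nonneg (hdnn k) hkpos.le)]
      rw [div_lt_iff₀ hkpos]
      calc d k ≤ (k : ℝ) * (ε' / 2) := hdk
        _ < ε' * k := by nlinarith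
    -- r k / k → 0
    have hrlim : Tendsto (fun k : ℕ => r k / k) atTop (nhds 0) := by
      have hg : Tendsto (fun k : ℕ => d k / k + 1 / k) atTop (nhds 0) := by
        have := hdlim.add tendsto_one_div_atTop_nhds_zero_nat
        simpa using this
      refine squeeze_zero' ?_ ?_ hg
      · filter_upwards [eventually_ge_atTop 1] with k hk
        exact div_nonneg (norm_nonneg _) (by positivity)
      · filter_upwards [eventually_ge_atTop 1] with k hk
        have hkpos : (0 : ℝ) < k := by exact_mod_cast hk
        rw [← add_div]
        exact div_le_div_of_nonneg_right (le_of_lt (hpd k)) hkpos.le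
    -- ‖p k‖ / k → 1
    have hnormk : ∀ k : ℕ, |‖p k‖ - k| ≤ r k := by
      intro k
      have : ‖(k : ℝ) • φ‖ = (k : ℝ) := by
        rw [norm_smul, hφ, mul_one, Real.norm_eq_abs, abs_of_nonneg (Nat.cast_nonneg k)]
      calc |‖p k‖ - (k : ℝ)| = |‖p k‖ - ‖(k : ℝ) • φ‖| := by rw [this]
        _ ≤ ‖p k - (k : ℝ) • φ‖ := abs_norm_sub_norm_le _ _
    have hs1 : Tendsto (fun k : ℕ => ‖p k‖ / k) atTop (nhds 1) := by
      have hsub : Tendsto (fun k : ℕ => ‖p k‖ / k - 1) atTop (nhds 0) := by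
        refine squeeze_zero_norm' ?_ hrlim
        filter_upwards [eventually_ge_atTop 1] with k hk
        have hkpos : (0 : ℝ) < k := by exact_mod_cast hk
        have : ‖p k‖ / k - 1 = (‖p k‖ - k) / k := by field_simp
        rw [this, Real.norm_eq_abs, abs_div, abs_of_pos hkpos]
        exact div_le_div_of_nonneg_right (hnormk k) hkpos.le
      have := hsub.add tendsto_const_nhds (f := fun k : ℕ => ‖p k‖ / k - 1) (b := (1:ℝ))
      simpa using this
    -- k / ‖p k‖ → 1
    have hinv : Tendsto (fun k : ℕ => (k : ℝ) / ‖p k‖) atTop (nhds 1) := by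
      have := hs1.inv₀ one_ne_zero
      simp only [inv_one] at this
      refine this.congr (fun k => ?_)
      rw [inv_div]
    -- eventually ‖p k‖ > 0
    have hppos : ∀ᶠ k : ℕ in atTop, 0 < ‖p k‖ := by
      have h12 : ∀ᶠ k : ℕ in atTop, (1 : ℝ) / 2 < ‖p k‖ / k :=
        hs1.eventually (eventually_gt_nhds (by norm_num : (1 : ℝ) / 2 < 1))
      filter_upwards [h12, eventually_ge_atTop 1] with k hk1 hk2
      have hkpos : (0 : ℝ) < k := by exact_mod_cast hk2
      have h3 : (1 : ℝ) / 2 * k < ‖p k‖ := (lt_div_iff₀ hkpos).mp hk1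
      nlinarith
    -- ‖p k‖ → ∞
    have hsTop : Tendsto (fun k : ℕ => ‖p k‖) atTop atTop := by
      have hmul : Tendsto (fun k : ℕ => (‖p k‖ / k) * k) atTop atTop :=
        Tendsto.pos_mul_atTop one_pos hs1 tendsto_natCast_atTop_atTop
      refine hmul.congr' ?_
      filter_upwards [eventually_ge_atTop 1] with k hk
      have hkne : (k : ℝ) ≠ 0 := by positivity
      field_simp
    -- direction tends to φ
    have hdirlim : Tendsto (fun k : ℕ => ‖(‖p k‖⁻¹ : ℝ) • p k - φ‖) atTop (nhds 0) := by
      have hg : Tendsto (fun k : ℕ => r k / k * ((k : ℝ) / ‖p k‖) + |(k : ℝ) / ‖p k‖ - 1|)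
          atTop (nhds 0) := by
        have h1 := hrlim.mul hinv
        have h2 : Tendsto (fun k : ℕ => |(k : ℝ) / ‖p k‖ - 1|) atTop (nhds 0) := by
          have := (hinv.sub (tendsto_const_nhds (x := (1:ℝ)))).abs
          simpa using this
        simpa using h1.add h2
      refine squeeze_zero' ?_ ?_ hg
      · exact Eventually.of_forall fun k => norm_nonneg _
      · filter_upwards [hppos, eventually_ge_atTop 1] with k hpk hk1
        have hkpos : (0 : ℝ) < k := by exact_mod_cast hk1
        have hkey : (‖p k‖⁻¹ : ℝ) • p k - φ
            = (‖p k‖⁻¹ : ℝ) • (p k - (k : ℝ) • φ) + ((k : ℝ) / ‖p k‖ - 1) • φ := by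
          rw [smul_sub, smul_smul, sub_smul, one_smul, div_eq_mul_inv, mul_comm]
          abel
        calc ‖(‖p k‖⁻¹ : ℝ) • p k - φ‖
            ≤ ‖(‖p k‖⁻¹ : ℝ) • (p k - (k : ℝ) • φ)‖ + ‖((k : ℝ) / ‖p k‖ - 1) • φ‖ := by
              rw [hkey]; exact norm_add_le _ _
          _ = r k * ‖p k‖⁻¹ + |(k : ℝ) / ‖p k‖ - 1| := by
              rw [norm_smul, norm_smul, hφ, mul_one, Real.norm_eq_abs, Real.norm_eq_abs,
                abs_of_pos (inv_pos.mpr hpk), mul_comm]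
          _ = r k / k * ((k : ℝ) / ‖p k‖) + |(k : ℝ) / ‖p k‖ - 1| := by
              congr 1
              field_simp
    -- ratio of consecutive norms tends to 1
    have hratio : Tendsto (fun k : ℕ => ‖p (k + 1)‖ / ‖p k‖) atTop (nhds 1) := by
      have ha : Tendsto (fun k : ℕ => ‖p (k + 1)‖ / ((k : ℝ) + 1)) atTop (nhds 1) := by
        have := hs1.comp (tendsto_add_atTop_nat 1)
        refine this.congr (fun k => ?_)
        simp [Function.comp]
      have hb : Tendsto (fun k : ℕ => ((k : ℝ) + 1) / k) atTop (nhds 1) := by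
        have h1 : Tendsto (fun k : ℕ => 1 + 1 / (k : ℝ)) atTop (nhds 1) := by
          have := tendsto_const_nhds (x := (1:ℝ)) (f := atTop (α := ℕ))
            |>.add tendsto_one_div_atTop_nhds_zero_nat
          simpa using this
        refine h1.congr' ?_
        filter_upwards [eventually_ge_atTop 1] with k hk
        have hkne : (k : ℝ) ≠ 0 := by positivity
        field_simp
      have hmul : Tendsto (fun k : ℕ =>
          ‖p (k + 1)‖ / ((k : ℝ) + 1) * (((k : ℝ) + 1) / k) * ((k : ℝ) / ‖p k‖))
          atTop (nhds 1) := by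
        have := (ha.mul hb).mul hinv
        simpa using this
      refine hmul.congr' ?_
      filter_upwards [hppos, eventually_ge_atTop 1] with k hpk hk1
      have hkne : (k : ℝ) ≠ 0 := by
        have : (0 : ℝ) < k := by exact_mod_cast hk1
        exact ne_of_gt this
      have hk1ne : (k : ℝ) + 1 ≠ 0 := by positivity
      have hpne : ‖p k‖ ≠ 0 := ne_of_gt hpk
      field_simp
    -- pick the starting index
    have hev : ∀ᶠ k : ℕ in atTop, ‖(‖p k‖⁻¹ : ℝ) • p k - φ‖ < ε := by
      have := hdirlim.eventually (eventually_lt_nhds hε)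
      simpa using this
    obtain ⟨K, hK⟩ := eventually_atTop.mp hev
    refine ⟨fun k => ‖p (k + K)‖, ?_, ?_, ?_⟩
    · intro k
      exact ⟨p (k + K), hpP _, hK (k + K) (Nat.le_add_left K k), rfl⟩
    · exact hsTop.comp (tendsto_add_atTop_nat K)
    · have := hratio.comp (tendsto_add_atTop_nat K)
      refine this.congr (fun k => ?_)
      simp only [Function.comp]
      rw [Nat.add_right_comm]
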